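/- In the block composite setting, fix x ∈ E, a block index i, and β > 0. Let C ⊆ E be a convex set containing x and x₊, and suppose ∇_i f is L^f_i-Lipschitz on C and ∇_i F is L^F_i-Lipschitz on C (operator norm), with L^F_i > 0 and β > L^f_i. Assume β ≥ L^f_i + L^F_i √(2 L_h) √(φ(x) − φ^*). Let s₊ be a global minimizer over ℝ^{n_i} of q_β(s) = φ̄^i(s;x) + (β/2)‖s − x^i‖² and set x₊ = x[i↦s₊]. Then h(F(x₊)) − h(l^i_F(s₊;x)) ≤ ((β − L^f_i)/2)‖x₊ − x‖² − (3 L_h (L^F_i)²/8)‖x₊ − x‖⁴. -/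

import Mathlib

open scoped RealInnerProductSpace

lemma taylor_aux {X Y : Type*} [NormedAddCommGroup X] [NormedSpace ℝ X]
    [NormedAddCommGroup Y] [NormedSpace ℝ Y]
    (φ : X → Y) (φ' : X → X →L[ℝ] Y) (a b : X)
    (hd : ∀ s, HasFDerivAt φ (φ' s) s) (L : ℝ)
    (hL : ∀ τ : ℝ, τ ∈ Set.Icc (0:ℝ) 1 →
      ‖φ' (a + τ • (b - a)) - φ' a‖ ≤ L * (τ * ‖b - a‖)) :
    ‖φ b - φ a - φ' a (b - a)‖ ≤ L / 2 * ‖b - a‖ ^ 2 := by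
  set v := b - a with hv
  set γ : ℝ → Y := fun τ => φ (a + τ • v) - τ • (φ' a v) - φ a with hγ
  have hline : ∀ τ : ℝ, HasDerivAt (fun τ : ℝ => a + τ • v) v τ := by
    intro τ
    simpa using ((hasDerivAt_id τ).smul_const v).const_add a
  have hγ' : ∀ τ : ℝ, HasDerivAt γ ((φ' (a + τ • v) - φ' a) v) τ := by
    intro τ
    have h1 : HasDerivAt (fun τ : ℝ => φ (a + τ • v)) (φ' (a + τ • v) v) τ :=
      (hd (a + τ • v)).comp_hasDerivAt τ (hline τ)
    have h2 : HasDerivAt (fun τ : ℝ => τ • (φ' a v) + φ a) (φ' a v) τ := by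
      simpa using ((hasDerivAt_id τ).smul_const (φ' a v)).add_const (φ a)
    have h3 := h1.sub h2
    simp only [ContinuousLinearMap.sub_apply]
    convert h3 using 2 with τ
    simp [γ, sub_sub]
    rfl
  have key : ∀ τ ∈ Set.Icc (0:ℝ) 1, ‖γ τ‖ ≤ L / 2 * ‖v‖ ^ 2 * τ ^ 2 := by
    refine image_norm_le_of_norm_deriv_right_le_deriv_boundary
      (f' := fun τ => (φ' (a + τ • v) - φ' a) v)
      (B' := fun τ => L * ‖v‖ ^ 2 * τ) ?_ ?_ ?_ ?_ ?_
    · exact (Continuous.continuousOn (by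
        exact continuous_iff_continuousAt.mpr fun τ => (hγ' τ).continuousAt))
    · exact fun τ _ => (hγ' τ).hasDerivWithinAt
    · simp [γ]
    · intro τ
      have := ((hasDerivAt_pow 2 τ).const_mul (L / 2 * ‖v‖ ^ 2))
      refine this.congr_deriv ?_
      simp only [Nat.cast_ofNat, Nat.reduceSub, pow_one]
      ring
    · intro τ hτ
      calc ‖(φ' (a + τ • v) - φ' a) v‖ ≤ ‖φ' (a + τ • v) - φ' a‖ * ‖v‖ :=
            (φ' (a + τ • v) - φ' a).le_opNorm v
        _ ≤ L * (τ * ‖v‖) * ‖v‖ := by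
            apply mul_le_mul_of_nonneg_right _ (norm_nonneg v)
            exact hL τ ⟨hτ.1, hτ.2.le⟩
        _ = L * ‖v‖ ^ 2 * τ := by ring
  have h1 := key 1 ⟨zero_le_one, le_refl 1⟩
  simp only [γ, one_smul, one_pow, mul_one] at h1
  have : a + v = b := by simp [hv]
  rw [this] at h1
  calc ‖φ b - φ a - φ' a v‖ = ‖φ b - φ' a v - φ a‖ := by rw [sub_right_comm]
    _ ≤ L / 2 * ‖v‖ ^ 2 := h1

lemma smooth_descent {X : Type*} [NormedAddCommGroup X] [InnerProductSpace ℝ X]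
    [CompleteSpace X]
    (h : X → ℝ) (gradh : X → X) (Lh : ℝ)
    (hgradh : ∀ u, HasGradientAt h (gradh u) u)
    (hlip : ∀ u v, ‖gradh u - gradh v‖ ≤ Lh * ‖u - v‖) :
    ∀ u w, h w ≤ h u + ⟪gradh u, w - u⟫ + Lh / 2 * ‖w - u‖ ^ 2 := by
  intro u w
  have key := taylor_aux h
      (fun z => (InnerProductSpace.toDual ℝ X (gradh z) : X →L[ℝ] ℝ)) u w
      (fun z => (hgradh z).hasFDerivAt) Lh ?_
  · have happ : (InnerProductSpace.toDual ℝ X (gradh u) : X →L[ℝ] ℝ) (w - u)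
        = ⟪gradh u, w - u⟫ := InnerProductSpace.toDual_apply_apply
    rw [happ, Real.norm_eq_abs] at key
    have := (abs_le.mp key).2
    linarith
  · intro τ hτ
    rw [← map_sub, (InnerProductSpace.toDual ℝ X).norm_map]
    calc ‖gradh (u + τ • (w - u)) - gradh u‖ ≤ Lh * ‖(u + τ • (w - u)) - u‖ :=
          hlip _ _
      _ = Lh * (τ * ‖w - u‖) := by
          rw [add_sub_cancel_left, norm_smul, Real.norm_of_nonneg hτ.1]

lemma pl_bound {X : Type*} [NormedAddCommGroup X] [InnerProductSpace ℝ X]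
    [CompleteSpace X]
    (h : X → ℝ) (gradh : X → X) (Lh : ℝ) (hLh : 0 < Lh)
    (hgradh : ∀ u, HasGradientAt h (gradh u) u)
    (hlip : ∀ u v, ‖gradh u - gradh v‖ ≤ Lh * ‖u - v‖)
    (hstar : ℝ) (hhstar : ∀ u, hstar ≤ h u) :
    ∀ u, ‖gradh u‖ ^ 2 ≤ 2 * Lh * (h u - hstar) := by
  intro u
  have hd := smooth_descent h gradh Lh hgradh hlip u (u - Lh⁻¹ • gradh u)
  have h1 : (u - Lh⁻¹ • gradh u) - u = -(Lh⁻¹ • gradh u) := by abel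
  rw [h1] at hd
  have h2 : ⟪gradh u, -(Lh⁻¹ • gradh u)⟫ = -(Lh⁻¹ * ‖gradh u‖ ^ 2) := by
    rw [inner_neg_right, real_inner_smul_right, real_inner_self_eq_norm_sq]
  have h3 : ‖-(Lh⁻¹ • gradh u)‖ ^ 2 = Lh⁻¹ ^ 2 * ‖gradh u‖ ^ 2 := by
    rw [norm_neg, norm_smul, Real.norm_of_nonneg (by positivity : (0:ℝ) ≤ Lh⁻¹)]
    ring
  rw [h2, h3] at hd
  have h4 := hhstar (u - Lh⁻¹ • gradh u)
  have hLh' : Lh ≠ 0 := ne_of_gt hLh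
  have h5 : Lh⁻¹ * ‖gradh u‖ ^ 2 - Lh / 2 * (Lh⁻¹ ^ 2 * ‖gradh u‖ ^ 2)
      = ‖gradh u‖ ^ 2 / (2 * Lh) := by
    field_simp
    ring
  have h6 : ‖gradh u‖ ^ 2 / (2 * Lh) ≤ h u - hstar := by linarith
  calc ‖gradh u‖ ^ 2 = 2 * Lh * (‖gradh u‖ ^ 2 / (2 * Lh)) := by field_simp
    _ ≤ 2 * Lh * (h u - hstar) := mul_le_mul_of_nonneg_left h6 (by positivity)


set_option maxHeartbeats 2000000

lemma key_algebra (β Lf LF Lh t c A SA D SD u e lam X : ℝ)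
    (hβ : 0 < β) (hLf0 : 0 ≤ Lf) (hβLf : Lf < β) (hLh : 0 < Lh) (hLF : 0 < LF)
    (hc : 0 < c) (hc2 : c ^ 2 = 2 * Lh * LF ^ 2)
    (hSA0 : 0 ≤ SA) (hSA2 : SA ^ 2 = A) (hcSA : c * SA ≤ β - Lf)
    (hD0 : 0 ≤ D) (hSD0 : 0 ≤ SD) (hSD2 : SD ^ 2 = D)
    (hlam1 : lam ≤ 1) (hβlam : β * lam ≤ c ^ 2 * t ^ 2 / 2)
    (hDineq : D ≤ A - (β - β * lam / 2 - Lf / 2) * t ^ 2)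
    (hu0 : 0 ≤ u) (hPL : u ^ 2 ≤ 2 * Lh * D)
    (he0 : 0 ≤ e) (he : e ≤ LF / 2 * t ^ 2)
    (hX : X ≤ u * e + Lh / 2 * e ^ 2) :
    X ≤ (β - Lf) / 2 * t ^ 2 - 3 * Lh * LF ^ 2 / 8 * t ^ 4 := by
  have hB0 : 0 < β - Lf := by linarith
  have hKA : (β - β * lam / 2 - Lf / 2) * t ^ 2 ≤ A := by linarith
  have hβlam1 : β * lam ≤ β := by
    have h0 := mul_le_mul_of_nonneg_left hlam1 hβ.le
    simpa using h0
  have hBK : (β - Lf) / 2 ≤ β - β * lam / 2 - Lf / 2 := by linarith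
  have hBA : (β - Lf) / 2 * t ^ 2 ≤ A :=
    le_trans (mul_le_mul_of_nonneg_right hBK (sq_nonneg t)) hKA
  have hc2A : c ^ 2 * A ≤ (β - Lf) ^ 2 := by
    have h0 : (c * SA) ^ 2 ≤ (β - Lf) ^ 2 :=
      pow_le_pow_left₀ (mul_nonneg hc.le hSA0) hcSA 2
    calc c ^ 2 * A = (c * SA) ^ 2 := by rw [mul_pow, hSA2]
      _ ≤ (β - Lf) ^ 2 := h0
  have hw : c ^ 2 * t ^ 2 ≤ 2 * (β - Lf) := by
    have h0 : (β - Lf) * (c ^ 2 * t ^ 2) ≤ (β - Lf) * (2 * (β - Lf)) := by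
      have h1 := mul_le_mul_of_nonneg_left hBA (sq_nonneg c)
      nlinarith [h1, hc2A]
    exact le_of_mul_le_mul_left h0 hB0
  have hs4 : c ^ 2 * D ≤ (β - Lf - c ^ 2 * t ^ 2 / 2) ^ 2 := by
    have F1 := mul_le_mul_of_nonneg_left hDineq (sq_nonneg c)
    have F3 := mul_le_mul_of_nonneg_left hβlam
      (mul_nonneg (sq_nonneg c) (sq_nonneg t))
    have F4 : 0 ≤ Lf * (c ^ 2 * t ^ 2) :=
      mul_nonneg hLf0 (mul_nonneg (sq_nonneg c) (sq_nonneg t))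
    nlinarith [F1, hc2A, F3, F4]
  have hs3 : 0 ≤ β - Lf - c ^ 2 * t ^ 2 / 2 := by linarith
  have hs5 : c * SD ≤ β - Lf - c ^ 2 * t ^ 2 / 2 := by
    refine le_of_pow_le_pow_left₀ two_ne_zero hs3 ?_
    calc (c * SD) ^ 2 = c ^ 2 * D := by rw [mul_pow, hSD2]
      _ ≤ (β - Lf - c ^ 2 * t ^ 2 / 2) ^ 2 := hs4
  have hs6 : LF * u ≤ c * SD := by
    refine le_of_pow_le_pow_left₀ two_ne_zero (mul_nonneg hc.le hSD0) ?_
    calc (LF * u) ^ 2 = LF ^ 2 * u ^ 2 := by ring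
      _ ≤ LF ^ 2 * (2 * Lh * D) := mul_le_mul_of_nonneg_left hPL (sq_nonneg LF)
      _ = (2 * Lh * LF ^ 2) * D := by ring
      _ = c ^ 2 * D := by rw [hc2]
      _ = (c * SD) ^ 2 := by rw [mul_pow, hSD2]
  have hch : c ^ 2 * t ^ 2 / 2 = Lh * LF ^ 2 * t ^ 2 := by rw [hc2]; ring
  rw [hch] at hs5
  have h7 : u * e ≤ (β - Lf - Lh * LF ^ 2 * t ^ 2) * (t ^ 2 / 2) := by
    calc u * e ≤ u * (LF / 2 * t ^ 2) := mul_le_mul_of_nonneg_left he hu0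
      _ = (LF * u) * (t ^ 2 / 2) := by ring
      _ ≤ (c * SD) * (t ^ 2 / 2) := by
          apply mul_le_mul_of_nonneg_right hs6
          positivity
      _ ≤ (β - Lf - Lh * LF ^ 2 * t ^ 2) * (t ^ 2 / 2) := by
          apply mul_le_mul_of_nonneg_right hs5
          positivity
  have h9 : e ^ 2 ≤ (LF / 2 * t ^ 2) ^ 2 := pow_le_pow_left₀ he0 he 2
  have h9' := mul_le_mul_of_nonneg_left h9 (by positivity : (0:ℝ) ≤ Lh / 2)
  nlinarith [hX, h7, h9']

/-- `upd x i s` is `x` with its `i`-th block replaced by `s`, in the Euclidean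
product space `E = ℝ^{n 0} × ⋯ × ℝ^{n (b-1)}`. -/
noncomputable def upd {b : ℕ} {n : Fin b → ℕ}
    (x : PiLp 2 (fun i => EuclideanSpace ℝ (Fin (n i)))) (i : Fin b)
    (s : EuclideanSpace ℝ (Fin (n i))) :
    PiLp 2 (fun i => EuclideanSpace ℝ (Fin (n i))) :=
  WithLp.toLp 2 (Function.update x i s)

lemma norm_upd_sub {b : ℕ} {n : Fin b → ℕ}
    (x : PiLp 2 (fun i => EuclideanSpace ℝ (Fin (n i)))) (i : Fin b)
    (s s' : EuclideanSpace ℝ (Fin (n i))) :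
    ‖upd x i s - upd x i s'‖ = ‖s - s'‖ := by
  classical
  rw [PiLp.norm_eq_of_L2]
  have hz : ∀ j, j ≠ i → (upd x i s - upd x i s') j = 0 := by
    intro j hj
    have h1 : (upd x i s) j = x j := Function.update_of_ne hj _ _
    have h2 : (upd x i s') j = x j := Function.update_of_ne hj _ _
    simp [PiLp.sub_apply, h1, h2]
  have hi : (upd x i s - upd x i s') i = s - s' := by
    simp [PiLp.sub_apply, upd]
  rw [Finset.sum_eq_single i]
  · rw [hi, Real.sqrt_sq (norm_nonneg _)]
  · intro j _ hj
    rw [hz j hj, norm_zero]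
    norm_num
  · intro hmem
    exact absurd (Finset.mem_univ i) hmem
/-- estimate (10) in Lemma 3.1: under the step-size condition
`β ≥ L^f_i + L^F_i √(2L_h) √(φ(x) − φ^*)`, at a global minimizer `sp` of the
regularized block model, with `x₊ = x[i ↦ sp]`,
`h(F(x₊)) − h(l^i_F(sp;x)) ≤ ((β − L^f_i)/2)‖x₊ − x‖² − (3L_h(L^F_i)²/8)‖x₊ − x‖⁴`. -/
theorem composite_linearization_error_bound
    {b m : ℕ} (hb : 0 < b) (hm : 0 < m) {n : Fin b → ℕ} (hn : ∀ i, 0 < n i)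
    (f : PiLp 2 (fun i => EuclideanSpace ℝ (Fin (n i))) → ℝ)
    (hf : Differentiable ℝ f)
    (F : PiLp 2 (fun i => EuclideanSpace ℝ (Fin (n i))) → EuclideanSpace ℝ (Fin m))
    (hF : Differentiable ℝ F)
    (h : EuclideanSpace ℝ (Fin m) → ℝ)
    (hhconv : ConvexOn ℝ Set.univ h) (hhdiff : Differentiable ℝ h)
    (Lh : ℝ) (hLh : 0 < Lh)
    (gradh : EuclideanSpace ℝ (Fin m) → EuclideanSpace ℝ (Fin m))
    (hgradh : ∀ u, HasGradientAt h (gradh u) u)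
    (hgradhLip : ∀ u v, ‖gradh u - gradh v‖ ≤ Lh * ‖u - v‖)
    (g : (i : Fin b) → EuclideanSpace ℝ (Fin (n i)) → ℝ)
    (hg : ∀ i, ConvexOn ℝ Set.univ (g i))
    -- lower bounds `f ≥ f^*`, `h ≥ h^*`, `Σᵢ gᵢ ≥ g^*`; `φ^* = f^* + h^* + g^*`
    (fstar hstar gstar : ℝ)
    (hfstar : ∀ y, fstar ≤ f y) (hhstar : ∀ u, hstar ≤ h u)
    (hgstar : ∀ y : PiLp 2 (fun i => EuclideanSpace ℝ (Fin (n i))), gstar ≤ ∑ j, g j (y j))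
    (x : PiLp 2 (fun i => EuclideanSpace ℝ (Fin (n i)))) (i : Fin b)
    (β Lf LF : ℝ) (hβ : 0 < β) (hLF : 0 < LF) (hβLf : Lf < β)
    -- `gif y = ∇_i f(y)`, the gradient at `y^i` of `s ↦ f(y[i ↦ s])`
    (gif : PiLp 2 (fun i => EuclideanSpace ℝ (Fin (n i))) → EuclideanSpace ℝ (Fin (n i)))
    (hgif : ∀ y, HasGradientAt (fun s => f (upd y i s)) (gif y) (y i))
    -- `GiF y = ∇_i F(y)`, the Fréchet derivative at `y^i` of `s ↦ F(y[i ↦ s])`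
    (GiF : PiLp 2 (fun i => EuclideanSpace ℝ (Fin (n i))) →
      (EuclideanSpace ℝ (Fin (n i)) →L[ℝ] EuclideanSpace ℝ (Fin m)))
    (hGiF : ∀ y, HasFDerivAt (fun s => F (upd y i s)) (GiF y) (y i))
    -- step-size condition `β ≥ L^f_i + L^F_i √(2 L_h) √(φ(x) − φ^*)`
    (hβcond : Lf + LF * Real.sqrt (2 * Lh) *
        Real.sqrt ((f x + h (F x) + ∑ j, g j (x j)) - (fstar + hstar + gstar)) ≤ β)
    -- `sp` is a global minimizer of `q_β(s) = φ̄^i(s;x) + (β/2)‖s − x^i‖²`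
    (sp : EuclideanSpace ℝ (Fin (n i)))
    (hmin : ∀ t,
      (f x + ⟪gif x, sp - x i⟫ + h (F x + GiF x (sp - x i)) + g i sp)
          + β / 2 * ‖sp - x i‖ ^ 2
        ≤ (f x + ⟪gif x, t - x i⟫ + h (F x + GiF x (t - x i)) + g i t)
          + β / 2 * ‖t - x i‖ ^ 2)
    -- `C` is a convex set containing `x` and `x₊ = x[i ↦ sp]`, on which the block
    -- gradients of `f` and `F` are Lipschitz
    (C : Set (PiLp 2 (fun i => EuclideanSpace ℝ (Fin (n i)))))
    (hC : Convex ℝ C) (hxC : x ∈ C) (hxpC : upd x i sp ∈ C)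
    (hgifLip : ∀ y ∈ C, ∀ z ∈ C, ‖gif y - gif z‖ ≤ Lf * ‖y - z‖)
    (hGiFLip : ∀ y ∈ C, ∀ z ∈ C, ‖GiF y - GiF z‖ ≤ LF * ‖y - z‖) :
    h (F (upd x i sp)) - h (F x + GiF x (sp - x i))
      ≤ (β - Lf) / 2 * ‖upd x i sp - x‖ ^ 2
        - 3 * Lh * LF ^ 2 / 8 * ‖upd x i sp - x‖ ^ 4 := by
  classical
  by_cases hsp : sp = x i
  · subst hsp
    have hxx : upd x i (x i) = x := by simp [upd]
    rw [hxx]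
    simp
  · have hupdself : upd x i (x i) = x := by simp [upd]
    set A := (f x + h (F x) + ∑ j, g j (x j)) - (fstar + hstar + gstar) with hAdef
    set SA := Real.sqrt A with hSAdef
    set v := sp - x i with hv
    set t := ‖v‖ with ht
    set xp := upd x i sp with hxp
    set lF := F x + GiF x v with hlF
    have hvne : v ≠ 0 := by rw [hv]; exact sub_ne_zero.mpr hsp
    have ht0 : 0 < t := by rw [ht]; exact norm_pos_iff.mpr hvne
    have hnorm : ‖xp - x‖ = t := by
      have h0 := norm_upd_sub x i sp (x i)
      rw [hupdself] at h0
      rw [hxp, ht, hv]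
      exact h0
    rw [hnorm]
    -- nonnegativity of the block Lipschitz constant of ∇f
    have hLf0 : 0 ≤ Lf := by
      have h1 := hgifLip x hxC xp hxpC
      have h2 : ‖x - xp‖ = t := by rw [norm_sub_rev]; exact hnorm
      rw [h2] at h1
      nlinarith [norm_nonneg (gif x - gif xp), ht0, h1]
    -- block derivatives of f and F at arbitrary points
    have hfd : ∀ s' : EuclideanSpace ℝ (Fin (n i)),
        HasFDerivAt (fun s => f (upd x i s))
          (InnerProductSpace.toDual ℝ (EuclideanSpace ℝ (Fin (n i)))
            (gif (upd x i s')) : EuclideanSpace ℝ (Fin (n i)) →L[ℝ] ℝ) s' := by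
      intro s'
      have h0 := (hgif (upd x i s')).hasFDerivAt
      have e1 : (fun s => f (upd (upd x i s') i s)) = fun s => f (upd x i s) := by
        funext s
        simp only [upd, Function.update_idem]
      have e2 : (upd x i s') i = s' := by simp [upd]
      rw [e1, e2] at h0
      exact h0
    have hFd : ∀ s' : EuclideanSpace ℝ (Fin (n i)),
        HasFDerivAt (fun s => F (upd x i s)) (GiF (upd x i s')) s' := by
      intro s'
      have h0 := hGiF (upd x i s')
      have e1 : (fun s => F (upd (upd x i s') i s)) = fun s => F (upd x i s) := by
        funext s
        simp only [upd, Function.update_idem]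
      have e2 : (upd x i s') i = s' := by simp [upd]
      rw [e1, e2] at h0
      exact h0
    -- the segment from x to x₊ lies in C
    have hmem : ∀ τ : ℝ, 0 ≤ τ → τ ≤ 1 → upd x i (x i + τ • v) ∈ C := by
      intro τ h0 h1
      have heq : upd x i (x i + τ • v) = (1 - τ) • x + τ • xp := by
        rw [WithLp.ext_iff]
        funext j
        by_cases hj : j = i
        · subst hj
          simp only [upd, WithLp.ofLp_toLp, Function.update_self, PiLp.add_apply, PiLp.smul_apply,
            hxp, hv]
          module
        · simp only [upd, WithLp.ofLp_toLp, Function.update_of_ne hj, PiLp.add_apply, PiLp.smul_apply,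
            hxp]
          module
      rw [heq]
      exact hC hxC hxpC (by linarith) h0 (by ring)
    have hsegnorm : ∀ τ : ℝ, 0 ≤ τ → ‖upd x i (x i + τ • v) - x‖ = τ * t := by
      intro τ h0
      have h1 := norm_upd_sub x i (x i + τ • v) (x i)
      rw [hupdself] at h1
      rw [h1, add_sub_cancel_left, norm_smul, Real.norm_of_nonneg h0, ht]
    -- Taylor bound for F along block i
    have hFt : ‖F xp - lF‖ ≤ LF / 2 * t ^ 2 := by
      have key := taylor_aux (fun s => F (upd x i s)) (fun s' => GiF (upd x i s'))
        (x i) sp hFd LF ?_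
      · have e3 : F xp - lF = F (upd x i sp) - F (upd x i (x i))
            - GiF (upd x i (x i)) (sp - x i) := by
          rw [hupdself, hlF, hxp, hv]
          abel
        rw [e3]
        have e4 : ‖sp - x i‖ = t := by rw [ht, hv]
        rw [← e4]
        exact key
      · intro τ hτ
        show ‖GiF (upd x i (x i + τ • (sp - x i))) - GiF (upd x i (x i))‖
          ≤ LF * (τ * ‖sp - x i‖)
        rw [hupdself]
        have e4 : ‖sp - x i‖ = t := by rw [ht, hv]
        rw [e4]
        calc ‖GiF (upd x i (x i + τ • (sp - x i))) - GiF x‖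
            ≤ LF * ‖upd x i (x i + τ • (sp - x i)) - x‖ :=
              hGiFLip _ (hmem τ hτ.1 hτ.2) x hxC
          _ = LF * (τ * t) := by rw [← hv, hsegnorm τ hτ.1]
    -- descent bound for f along block i
    have hft : f xp ≤ f x + ⟪gif x, v⟫ + Lf / 2 * t ^ 2 := by
      have key := taylor_aux (fun s => f (upd x i s))
        (fun s' => (InnerProductSpace.toDual ℝ (EuclideanSpace ℝ (Fin (n i)))
          (gif (upd x i s')) : EuclideanSpace ℝ (Fin (n i)) →L[ℝ] ℝ))
        (x i) sp hfd Lf ?_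
      · have happ : (InnerProductSpace.toDual ℝ (EuclideanSpace ℝ (Fin (n i)))
            (gif (upd x i (x i))) : EuclideanSpace ℝ (Fin (n i)) →L[ℝ] ℝ) (sp - x i)
            = ⟪gif (upd x i (x i)), sp - x i⟫ := InnerProductSpace.toDual_apply_apply
        rw [happ, hupdself, Real.norm_eq_abs] at key
        have h5 := (abs_le.mp key).2
        have e4 : ‖sp - x i‖ = t := by rw [ht, hv]
        rw [e4] at h5
        have e5 : f (upd x i sp) = f xp := by rw [hxp]
        have e6 : ⟪gif x, sp - x i⟫ = ⟪gif x, v⟫ := by rw [hv]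
        rw [e5, e6] at h5
        linarith
      · intro τ hτ
        show ‖(InnerProductSpace.toDual ℝ (EuclideanSpace ℝ (Fin (n i)))
            (gif (upd x i (x i + τ • (sp - x i)))) : EuclideanSpace ℝ (Fin (n i)) →L[ℝ] ℝ)
            - (InnerProductSpace.toDual ℝ (EuclideanSpace ℝ (Fin (n i)))
            (gif (upd x i (x i))) : EuclideanSpace ℝ (Fin (n i)) →L[ℝ] ℝ)‖
          ≤ Lf * (τ * ‖sp - x i‖)
        rw [← map_sub,
          (InnerProductSpace.toDual ℝ (EuclideanSpace ℝ (Fin (n i)))).norm_map,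
          hupdself]
        have e4 : ‖sp - x i‖ = t := by rw [ht, hv]
        rw [e4]
        calc ‖gif (upd x i (x i + τ • (sp - x i))) - gif x‖
            ≤ Lf * ‖upd x i (x i + τ • (sp - x i)) - x‖ :=
              hgifLip _ (hmem τ hτ.1 hτ.2) x hxC
          _ = Lf * (τ * t) := by rw [← hv, hsegnorm τ hτ.1]
    -- the sum of the gᵢ at x₊
    have hgsum : g i (x i) - g i sp ≤ (∑ j, g j (x j)) - gstar := by
      have h0 := hgstar xp
      have e1 : ∑ j, g j (xp j) = g i sp + ∑ j ∈ Finset.univ.erase i, g j (x j) := by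
        rw [← Finset.add_sum_erase Finset.univ (fun j => g j (xp j))
          (Finset.mem_univ i)]
        congr 1
        · congr 1
          rw [hxp]
          simp [upd]
        · refine Finset.sum_congr rfl fun j hj => ?_
          have hj' : j ≠ i := Finset.ne_of_mem_erase hj
          rw [hxp]
          simp [upd, Function.update_of_ne hj']
      have e2 : ∑ j, g j (x j) = g i (x i) + ∑ j ∈ Finset.univ.erase i, g j (x j) :=
        (Finset.add_sum_erase Finset.univ (fun j => g j (x j))
          (Finset.mem_univ i)).symm
      rw [e1] at h0
      rw [e2]
      linarith
    -- basic scalar quantities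
    have hc : (0:ℝ) < LF * Real.sqrt (2 * Lh) :=
      mul_pos hLF (Real.sqrt_pos.mpr (by linarith))
    set c := LF * Real.sqrt (2 * Lh) with hcdef
    have hc2 : c ^ 2 = 2 * Lh * LF ^ 2 := by
      rw [hcdef, mul_pow, Real.sq_sqrt (by linarith : (0:ℝ) ≤ 2 * Lh)]
      ring
    have hA0 : 0 ≤ A := by
      rw [hAdef]
      linarith [hfstar x, hhstar (F x), hgstar x]
    have hSA0 : 0 ≤ SA := Real.sqrt_nonneg A
    have hSA2 : SA ^ 2 = A := Real.sq_sqrt hA0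
    have hB0 : 0 < β - Lf := by linarith
    have hcSA : c * SA ≤ β - Lf := by linarith [hβcond]
    -- the interpolation parameter
    set lam := min 1 (c ^ 2 * t ^ 2 / (2 * β)) with hlamdef
    have hlam0 : 0 < lam := lt_min one_pos (by positivity)
    have hlam1 : lam ≤ 1 := min_le_left _ _
    have hβlam : β * lam ≤ c ^ 2 * t ^ 2 / 2 := by
      have h1 : lam ≤ c ^ 2 * t ^ 2 / (2 * β) := min_le_right _ _
      calc β * lam ≤ β * (c ^ 2 * t ^ 2 / (2 * β)) :=
            mul_le_mul_of_nonneg_left h1 hβ.le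
        _ = c ^ 2 * t ^ 2 / 2 := by
            field_simp
    -- strong minimality inequality at sp
    set s' := (1 - lam) • sp + lam • (x i) with hs'def
    have hs'sub : s' - x i = (1 - lam) • v := by
      rw [hs'def, hv]
      module
    have hinner1 : ⟪gif x, s' - x i⟫ = (1 - lam) * ⟪gif x, v⟫ := by
      rw [hs'sub, real_inner_smul_right]
    have hFcomb : F x + GiF x (s' - x i) = (1 - lam) • lF + lam • (F x) := by
      rw [hs'sub, map_smul, hlF]
      module
    have hhcomb : h ((1 - lam) • lF + lam • F x) ≤ (1 - lam) * h lF + lam * h (F x) :=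
      hhconv.2 (Set.mem_univ _) (Set.mem_univ _) (by linarith) hlam0.le (by ring)
    have hgcomb : g i s' ≤ (1 - lam) * g i sp + lam * g i (x i) :=
      (hg i).2 (Set.mem_univ _) (Set.mem_univ _) (by linarith) hlam0.le (by ring)
    have hns' : ‖s' - x i‖ ^ 2 = (1 - lam) ^ 2 * t ^ 2 := by
      rw [hs'sub, norm_smul, Real.norm_of_nonneg (by linarith : (0:ℝ) ≤ 1 - lam),
        ← ht]
      ring
    have hmin' := hmin s'
    rw [hinner1, hFcomb, hns'] at hmin'
    have hKey : ⟪gif x, v⟫ + h lF + g i sp + β * (2 - lam) / 2 * t ^ 2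
        ≤ h (F x) + g i (x i) := by
      have hstep : lam * (⟪gif x, v⟫ + h lF + g i sp + β * (2 - lam) / 2 * t ^ 2)
          ≤ lam * (h (F x) + g i (x i)) := by
        nlinarith [hmin', hhcomb, hgcomb]
      exact le_of_mul_le_mul_left hstep hlam0
    -- bound on h lF - hstar
    have hDineq : h lF - hstar ≤ A - (β - β * lam / 2 - Lf / 2) * t ^ 2 := by
      have h1 := hfstar xp
      rw [hAdef]
      nlinarith [hKey, hft, hgsum, h1]
    have hD0 : 0 ≤ h lF - hstar := by linarith [hhstar lF]
    set SD := Real.sqrt (h lF - hstar) with hSDdef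
    have hSD0 : 0 ≤ SD := Real.sqrt_nonneg _
    have hSD2 : SD ^ 2 = h lF - hstar := Real.sq_sqrt hD0
    have hPL := pl_bound h gradh Lh hLh hgradh hgradhLip hstar hhstar lF
    have hsm := smooth_descent h gradh Lh hgradh hgradhLip lF (F xp)
    have hinner2 : ⟪gradh lF, F xp - lF⟫ ≤ ‖gradh lF‖ * ‖F xp - lF‖ :=
      real_inner_le_norm _ _
    clear_value A SA t c lam SD
    have hX : h (F xp) - h lF
        ≤ ‖gradh lF‖ * ‖F xp - lF‖ + Lh / 2 * ‖F xp - lF‖ ^ 2 := by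
      linarith [hsm, hinner2]
    exact key_algebra β Lf LF Lh t c A SA (h lF - hstar) SD ‖gradh lF‖
      ‖F xp - lF‖ lam (h (F xp) - h lF) hβ hLf0 hβLf hLh hLF hc hc2 hSA0 hSA2
      hcSA hD0 hSD0 hSD2 hlam1 hβlam hDineq (norm_nonneg _) hPL (norm_nonneg _)
      hFt hX
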